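/- Suppose the pair (λ,β) is T-log-symplectic and let S ⊆ S(λ,β) be linearly independent over ℂ. Then no element w of S_{≥2} satisfies both w ∈ W(λ,β) and |J_w| = 3. -/

import Mathlib

open Finset Matrix

noncomputable section

/-- The standard embedding of an integer vector into `ℂⁿ`. -/
def cvec {n : ℕ} (w : Fin n → ℤ) : Fin n → ℂ := fun j => (w j : ℂ)

/-- `J_w = { j : w_j = -1 }`. -/
def Jset {n : ℕ} (w : Fin n → ℤ) : Finset (Fin n) :=
  Finset.univ.filter (fun j => w j = -1)

/-- The linear map `β : ℂⁿ → V`, `w ↦ ∑ w_j β_j`. -/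
def bmap {n : ℕ} {V : Type*} [AddCommGroup V] [Module ℂ V]
    (β : Fin n → V) (w : Fin n → ℂ) : V :=
  ∑ j, w j • β j

/-- The pair `(λ, β)` is T-log-symplectic. -/
def TLogSymp {n : ℕ} {V : Type*} [AddCommGroup V] [Module ℂ V]
    (M : Matrix (Fin n) (Fin n) ℂ) (β : Fin n → V) : Prop :=
  ∀ w : Fin n → ℂ, M.mulVec w = 0 → bmap β w = 0 → w = 0

/-- The set `W(λ, β)`. -/
def Wset {n : ℕ} {V : Type*} [AddCommGroup V] [Module ℂ V]
    (M : Matrix (Fin n) (Fin n) ℂ) (β : Fin n → V) : Set (Fin n → ℤ) :=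
  {w | (∀ j, -1 ≤ w j) ∧ (∀ j, j ∉ Jset w → M.mulVec (cvec w) j = 0) ∧
    bmap β (cvec w) = 0}

/-- The set `S(λ, β)` of smoothable weights. -/
def Sset {n : ℕ} {V : Type*} [AddCommGroup V] [Module ℂ V]
    (M : Matrix (Fin n) (Fin n) ℂ) (β : Fin n → V) : Set (Fin n → ℤ) :=
  {θ | θ ∈ Wset M β ∧ (Jset θ).card = 2}

/-- `S_m`: sums of exactly `m` elements of `S`, repetitions allowed. -/
def SumOf {n : ℕ} (S : Set (Fin n → ℤ)) (m : ℕ) : Set (Fin n → ℤ) :=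
  {w | ∃ l : Multiset (Fin n → ℤ), (∀ x ∈ l, x ∈ S) ∧ Multiset.card l = m ∧ l.sum = w}

/-- `S_{≥ m}`: sums of at least `m` elements of `S`, repetitions allowed. -/
def SumGE {n : ℕ} (S : Set (Fin n → ℤ)) (m : ℕ) : Set (Fin n → ℤ) :=
  {w | ∃ m', m ≤ m' ∧ w ∈ SumOf S m'}

/-- A vector `w ∈ ℤⁿ` is negatively bordered. -/
def NegBordered {n : ℕ} (w : Fin n → ℤ) : Prop :=
  ∃ j k : Fin n, j < k ∧ w j = -1 ∧ w k = -1 ∧ (∀ i, i < j → w i = 0) ∧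
    (∀ i, k < i → w i = 0) ∧ (∀ i, j < i → i < k → 0 ≤ w i)


def Vmap {n : ℕ} (M : Matrix (Fin n) (Fin n) ℂ) (θ : Fin n → ℤ) : Fin n → ℂ :=
  M.mulVec (cvec θ)

lemma skew_dot {n : ℕ} (M : Matrix (Fin n) (Fin n) ℂ) (hskew : Mᵀ = -M) (x : Fin n → ℂ) :
    x ⬝ᵥ M.mulVec x = 0 := by
  have h1 : x ᵥ* M = -(M *ᵥ x) := by
    have h := Matrix.vecMul_transpose Mᵀ x
    rw [Matrix.transpose_transpose, hskew, Matrix.neg_mulVec] at h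
    exact h
  have h2 := Matrix.dotProduct_mulVec x M x
  rw [h1, neg_dotProduct, dotProduct_comm] at h2
  rw [dotProduct_comm]
  linear_combination h2 / 2

set_option linter.unusedSectionVars false

def Esp {N : ℕ} (p q : Fin N) : Fin N → ℂ := Pi.single p 1 - Pi.single q 1

def spny {N : ℕ} {ι : Type*} (F : ι → (Fin N → ℂ)) (J : ι → Finset (Fin N)) (y : Fin N) :
    Submodule ℂ (Fin N → ℂ) :=
  Submodule.span ℂ (F '' {θ | y ∉ J θ})

section MedianMachinery
variable {N : ℕ} {ι : Type*} [Fintype ι]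

lemma Esp_self (p : Fin N) : Esp p p = 0 := sub_self _

lemma Esp_neg (p q : Fin N) : Esp q p = -Esp p q := (neg_sub _ _).symm

lemma Esp_apply_left {p q : Fin N} (h : p ≠ q) : Esp p q p = 1 := by
  simp only [Esp, Pi.sub_apply, Pi.single_eq_same, Pi.single_eq_of_ne h, sub_zero]

lemma Esp_apply_right {p q : Fin N} (h : p ≠ q) : Esp p q q = -1 := by
  simp only [Esp, Pi.sub_apply, Pi.single_eq_same, Pi.single_eq_of_ne (Ne.symm h), zero_sub]

lemma Esp_apply_other {p q x : Fin N} (h1 : x ≠ p) (h2 : x ≠ q) : Esp p q x = 0 := by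
  simp only [Esp, Pi.sub_apply, Pi.single_eq_of_ne h1, Pi.single_eq_of_ne h2, sub_zero]

lemma rep_unique {F : ι → (Fin N → ℂ)} {J : ι → Finset (Fin N)}
    (hind : LinearIndependent ℂ F) (d : ι →₀ ℂ) (y : Fin N)
    (h : Finsupp.linearCombination ℂ F d ∈ spny F J y) {θ : ι} (hdθ : d θ ≠ 0) : y ∉ J θ := by
  obtain ⟨ll, hls, hlc⟩ := (Finsupp.mem_span_image_iff_linearCombination ℂ).1 h
  have hld : ll = d := linearIndependent_iff_injective_finsuppLinearCombination.1 hind hlc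
  have hsub := (Finsupp.mem_supported ℂ ll).1 hls
  rw [hld] at hsub
  exact hsub (Finsupp.mem_support_iff.2 hdθ)

lemma median_exists (F : ι → (Fin N → ℂ)) (J : ι → Finset (Fin N))
    (hind : LinearIndependent ℂ F)
    (hsupp : ∀ θ x, F θ x ≠ 0 ↔ x ∈ J θ)
    (hsum0 : ∀ θ, ∑ x, F θ x = 0)
    (a b c : Fin N) (hab : a ≠ b) (hac : a ≠ c) (hbc : b ≠ c) :
    ∃ y : Fin N, ∀ p q : Fin N, (p = a ∨ p = b ∨ p = c) → (q = a ∨ q = b ∨ q = c) →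
      p ≠ q → p ≠ y → q ≠ y → Esp p q ∉ spny F J y := by
  classical
  have hflip : ∀ (y p q : Fin N), Esp p q ∉ spny F J y → Esp q p ∉ spny F J y := by
    intro y p q h hmem
    exact h (by rw [show Esp p q = -Esp q p from Esp_neg q p]; exact neg_mem hmem)
  have hspan_le : ∀ y : Fin N, spny F J y ≤ Submodule.span ℂ (Set.range F) :=
    fun y => Submodule.span_mono (Set.image_subset_range F _)
  by_cases hACs : Esp a c ∈ Submodule.span ℂ (Set.range F)
  case neg =>
    refine ⟨b, ?_⟩
    have nAC : Esp a c ∉ spny F J b := fun h => hACs (hspan_le b h)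
    have nCA := hflip _ _ _ nAC
    rintro p q (rfl | rfl | rfl) (rfl | rfl | rfl) hpq hpy hqy <;>
      first
        | exact absurd rfl hpq
        | exact absurd rfl hpy
        | exact absurd rfl hqy
        | exact nAC
        | exact nCA
  by_cases hBCs : Esp b c ∈ Submodule.span ℂ (Set.range F)
  case neg =>
    refine ⟨a, ?_⟩
    have nBC : Esp b c ∉ spny F J a := fun h => hBCs (hspan_le a h)
    have nCB := hflip _ _ _ nBC
    rintro p q (rfl | rfl | rfl) (rfl | rfl | rfl) hpq hpy hqy <;>
      first
        | exact absurd rfl hpq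
        | exact absurd rfl hpy
        | exact absurd rfl hqy
        | exact nBC
        | exact nCB
  obtain ⟨d1, hd1⟩ : ∃ d : ι →₀ ℂ, Finsupp.linearCombination ℂ F d = Esp a c := by
    rw [Finsupp.mem_span_range_iff_exists_finsupp] at hACs
    obtain ⟨cc, hcc⟩ := hACs
    exact ⟨cc, by rw [Finsupp.linearCombination_apply]; exact hcc⟩
  obtain ⟨d2, hd2⟩ : ∃ d : ι →₀ ℂ, Finsupp.linearCombination ℂ F d = Esp b c := by
    rw [Finsupp.mem_span_range_iff_exists_finsupp] at hBCs
    obtain ⟨cc, hcc⟩ := hBCs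
    exact ⟨cc, by rw [Finsupp.linearCombination_apply]; exact hcc⟩
  have hd3 : Finsupp.linearCombination ℂ F (d1 - d2) = Esp a b := by
    rw [map_sub, hd1, hd2]
    simp only [Esp]
    abel
  by_cases hA : ∃ θ, d2 θ ≠ 0 ∧ a ∈ J θ
  case pos =>
    obtain ⟨θ0, hθ0, haθ0⟩ := hA
    refine ⟨a, ?_⟩
    have nBC : Esp b c ∉ spny F J a := by
      intro h
      rw [← hd2] at h
      exact rep_unique hind d2 a h hθ0 haθ0
    have nCB := hflip _ _ _ nBC
    rintro p q (rfl | rfl | rfl) (rfl | rfl | rfl) hpq hpy hqy <;>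
      first
        | exact absurd rfl hpq
        | exact absurd rfl hpy
        | exact absurd rfl hqy
        | exact nBC
        | exact nCB
  by_cases hB : ∃ θ, d1 θ ≠ 0 ∧ b ∈ J θ
  case pos =>
    obtain ⟨θ0, hθ0, hbθ0⟩ := hB
    refine ⟨b, ?_⟩
    have nAC : Esp a c ∉ spny F J b := by
      intro h
      rw [← hd1] at h
      exact rep_unique hind d1 b h hθ0 hbθ0
    have nCA := hflip _ _ _ nAC
    rintro p q (rfl | rfl | rfl) (rfl | rfl | rfl) hpq hpy hqy <;>
      first
        | exact absurd rfl hpq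
        | exact absurd rfl hpy
        | exact absurd rfl hqy
        | exact nAC
        | exact nCA
  by_cases hC : ∃ θ, (d1 - d2) θ ≠ 0 ∧ c ∈ J θ
  case pos =>
    obtain ⟨θ0, hθ0, hcθ0⟩ := hC
    refine ⟨c, ?_⟩
    have nAB : Esp a b ∉ spny F J c := by
      intro h
      rw [← hd3] at h
      exact rep_unique hind (d1 - d2) c h hθ0 hcθ0
    have nBA := hflip _ _ _ nAB
    rintro p q (rfl | rfl | rfl) (rfl | rfl | rfl) hpq hpy hqy <;>
      first
        | exact absurd rfl hpq
        | exact absurd rfl hpy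
        | exact absurd rfl hqy
        | exact nAB
        | exact nBA
  -- main case: construct the median vertex
  set C : Finset ι := d1.support.filter (fun θ => d1 θ = d2 θ) with hC_def
  have hCprop : ∀ θ ∈ C, d1 θ ≠ 0 ∧ d1 θ = d2 θ := fun θ hθ =>
    ⟨Finsupp.mem_support_iff.1 (Finset.mem_filter.1 hθ).1, (Finset.mem_filter.1 hθ).2⟩
  have heval : ∀ x, ∑ θ ∈ d1.support, d1 θ * F θ x = Esp a c x := by
    intro x
    have h := congrFun hd1 x
    rw [Finsupp.linearCombination_apply, Finsupp.sum] at h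
    simpa [Finset.sum_apply] using h
  have hCc : ∃ θ ∈ C, c ∈ J θ := by
    have h := heval c
    rw [Esp_apply_right hac] at h
    have hne : ∑ θ ∈ d1.support, d1 θ * F θ c ≠ 0 := by rw [h]; norm_num
    obtain ⟨θ, hθs, hθne⟩ := Finset.exists_ne_zero_of_sum_ne_zero hne
    have hd1θ : d1 θ ≠ 0 := left_ne_zero_of_mul hθne
    have hFθ : F θ c ≠ 0 := right_ne_zero_of_mul hθne
    have hcJ : c ∈ J θ := (hsupp θ c).1 hFθ
    refine ⟨θ, ?_, hcJ⟩
    by_cases h12 : d1 θ = d2 θ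
    · exact Finset.mem_filter.2 ⟨hθs, h12⟩
    · exact absurd ⟨θ, by rw [Finsupp.sub_apply]; exact sub_ne_zero_of_ne h12, hcJ⟩ hC
  by_cases hY : ∃ y, (∃ θ ∈ C, y ∈ J θ) ∧ ∃ θ', (d1 - d2) θ' ≠ 0 ∧ y ∈ J θ'
  case pos =>
    obtain ⟨y, ⟨θ1, hθ1C, hyθ1⟩, θ2, hθ2, hyθ2⟩ := hY
    refine ⟨y, ?_⟩
    have nAC : Esp a c ∉ spny F J y := by
      intro h; rw [← hd1] at h
      exact rep_unique hind d1 y h (hCprop θ1 hθ1C).1 hyθ1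
    have nBC : Esp b c ∉ spny F J y := by
      intro h; rw [← hd2] at h
      refine rep_unique hind d2 y h ?_ hyθ1
      rw [← (hCprop θ1 hθ1C).2]; exact (hCprop θ1 hθ1C).1
    have nAB : Esp a b ∉ spny F J y := by
      intro h; rw [← hd3] at h
      exact rep_unique hind (d1 - d2) y h hθ2 hyθ2
    have nCA := hflip _ _ _ nAC
    have nCB := hflip _ _ _ nBC
    have nBA := hflip _ _ _ nAB
    rintro p q (rfl | rfl | rfl) (rfl | rfl | rfl) hpq hpy hqy <;>
      first
        | exact absurd rfl hpq
        | exact nAB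
        | exact nAC
        | exact nBA
        | exact nBC
        | exact nCA
        | exact nCB
  case neg =>
    exfalso
    push_neg at hY
    set P : Finset (Fin N) := Finset.univ.filter (fun x => ∃ θ ∈ C, x ∈ J θ) with hP_def
    have hzP : ∀ x ∈ P, (∑ θ ∈ C, d1 θ * F θ x) = Esp a c x := by
      intro x hx
      rw [← heval x]
      have hsplit := Finset.sum_filter_add_sum_filter_not d1.support
        (fun θ => d1 θ = d2 θ) (fun θ => d1 θ * F θ x)
      have hz : ∑ θ ∈ d1.support.filter (fun θ => ¬ d1 θ = d2 θ), d1 θ * F θ x = 0 := by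
        apply Finset.sum_eq_zero
        intro θ hθ
        obtain ⟨hθs, hθne⟩ := Finset.mem_filter.1 hθ
        have h12 : (d1 - d2) θ ≠ 0 := by
          rw [Finsupp.sub_apply]; exact sub_ne_zero_of_ne hθne
        have hxθ : x ∉ J θ := hY x (Finset.mem_filter.1 hx).2 θ h12
        have hF0 : F θ x = 0 := by
          by_contra hF
          exact hxθ ((hsupp θ x).1 hF)
        rw [hF0, mul_zero]
      rw [← hsplit, hz, add_zero]
    have hz0 : ∀ x, x ∉ P → (∑ θ ∈ C, d1 θ * F θ x) = 0 := by
      intro x hx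
      apply Finset.sum_eq_zero
      intro θ hθ
      have hF0 : F θ x = 0 := by
        by_contra hF
        exact hx (Finset.mem_filter.2 ⟨Finset.mem_univ x, ⟨θ, hθ, (hsupp θ x).1 hF⟩⟩)
      rw [hF0, mul_zero]
    have htot : ∑ x, ∑ θ ∈ C, d1 θ * F θ x = 0 := by
      rw [Finset.sum_comm]
      apply Finset.sum_eq_zero
      intro θ hθ
      rw [← Finset.mul_sum, hsum0 θ, mul_zero]
    have htot2 : ∑ x ∈ P, Esp a c x = 0 := by
      have e1 : ∑ x ∈ P, Esp a c x = ∑ x ∈ P, ∑ θ ∈ C, d1 θ * F θ x :=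
        Finset.sum_congr rfl (fun x hx => (hzP x hx).symm)
      have e2 : ∑ x ∈ P, ∑ θ ∈ C, d1 θ * F θ x = ∑ x, ∑ θ ∈ C, d1 θ * F θ x :=
        Finset.sum_subset (Finset.subset_univ P) (fun x _ hx => hz0 x hx)
      rw [e1, e2, htot]
    have haP : a ∉ P := by
      intro haP
      obtain ⟨θ, hθC, haθ⟩ := (Finset.mem_filter.1 haP).2
      refine hA ⟨θ, ?_, haθ⟩
      rw [← (hCprop θ hθC).2]; exact (hCprop θ hθC).1
    have hcP : c ∈ P := by
      obtain ⟨θ, hθC, hcθ⟩ := hCc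
      exact Finset.mem_filter.2 ⟨Finset.mem_univ c, θ, hθC, hcθ⟩
    have hval : ∑ x ∈ P, Esp a c x = -1 := by
      have h1 : ∑ x ∈ P, Pi.single a (1 : ℂ) x = 0 := by
        apply Finset.sum_eq_zero
        intro x hx
        have hxa : x ≠ a := by rintro rfl; exact haP hx
        exact Pi.single_eq_of_ne hxa 1
      have h2 : ∑ x ∈ P, Pi.single c (1 : ℂ) x = 1 := by
        rw [Finset.sum_eq_single_of_mem c hcP (fun x _ hxc => Pi.single_eq_of_ne hxc 1)]
        exact Pi.single_eq_same c 1
      simp only [Esp, Pi.sub_apply, Finset.sum_sub_distrib, h1, h2]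
      norm_num
    rw [hval] at htot2
    norm_num at htot2

end MedianMachinery

theorem stmt5 (n : ℕ) (hn : 0 < n) (M : Matrix (Fin n) (Fin n) ℂ) (hskew : Mᵀ = -M)
    {V : Type*} [AddCommGroup V] [Module ℂ V] (β : Fin n → V)
    (hTLS : TLogSymp M β) (S : Set (Fin n → ℤ)) (hS : S ⊆ Sset M β)
    (hindep : LinearIndependent ℂ (fun θ : S => cvec (θ : Fin n → ℤ))) :
    ∀ w ∈ SumGE S 2, ¬(w ∈ Wset M β ∧ (Jset w).card = 3) := by
  classical
  rintro w ⟨m, hm, l, hlS, hlcard, hlsum⟩ ⟨hwW, hwJ3⟩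
  obtain ⟨hwge, hwlam, hwbm⟩ := hwW
  set T : Finset (Fin n → ℤ) := l.toFinset with hT_def
  have hTS : ∀ θ ∈ T, θ ∈ S := fun θ hθ => hlS θ (Multiset.mem_toFinset.1 hθ)
  set cc : (Fin n → ℤ) → ℕ := fun θ => l.count θ with hcc_def
  have hccpos : ∀ θ ∈ T, 0 < cc θ := fun θ hθ =>
    Multiset.count_pos.2 (Multiset.mem_toFinset.1 hθ)
  have hwdef : ∑ θ ∈ T, cc θ • θ = w := by
    rw [← hlsum]; exact (Finset.sum_multiset_count l).symm
  have hJmem : ∀ (u : Fin n → ℤ) (x : Fin n), x ∈ Jset u ↔ u x = -1 := by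
    intro u x; simp [Jset]
  clear_value T cc
  clear hT_def hcc_def hlsum hlcard hlS hm
  -- facts about elements of T
  have hθW : ∀ θ ∈ T, θ ∈ Wset M β := fun θ hθ => (hS (hTS θ hθ)).1
  have hθ2 : ∀ θ ∈ T, (Jset θ).card = 2 := fun θ hθ => (hS (hTS θ hθ)).2
  have hθge : ∀ θ ∈ T, ∀ x, -1 ≤ θ x := fun θ hθ => (hθW θ hθ).1
  have hVoff : ∀ θ ∈ T, ∀ x, x ∉ Jset θ → Vmap M θ x = 0 := fun θ hθ => (hθW θ hθ).2.1
  have hθbm : ∀ θ ∈ T, bmap β (cvec θ) = 0 := fun θ hθ => (hθW θ hθ).2.2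
  have hθpos : ∀ θ ∈ T, ∀ x, x ∉ Jset θ → 0 ≤ θ x := by
    intro θ hθ x hx
    have h1 := hθge θ hθ x
    have h2 : θ x ≠ -1 := fun h => hx ((hJmem θ x).2 h)
    omega
  -- generic linearity helpers
  have hmulVec_sum : ∀ (κ : Type) (s : Finset κ) (f : κ → (Fin n → ℤ)) (g : κ → ℂ),
      M.mulVec (∑ θ ∈ s, g θ • cvec (f θ)) = ∑ θ ∈ s, g θ • Vmap M (f θ) := by
    intro κ s f g
    rw [← Matrix.mulVecLin_apply, map_sum]
    exact Finset.sum_congr rfl (fun θ _ => by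
      rw [_root_.map_smul, Matrix.mulVecLin_apply]; rfl)
  have hbmap_sum : ∀ (κ : Type) (s : Finset κ) (f : κ → (Fin n → ℤ)) (g : κ → ℂ),
      bmap β (∑ θ ∈ s, g θ • cvec (f θ)) = ∑ θ ∈ s, g θ • bmap β (cvec (f θ)) := by
    intro κ s f g
    simp only [bmap, Finset.sum_apply, Pi.smul_apply, smul_eq_mul, Finset.sum_smul,
      Finset.smul_sum, smul_smul]
    exact Finset.sum_comm
  have hcvec_sum : ∀ (κ : Type) (s : Finset κ) (f : κ → (Fin n → ℤ)) (g : κ → ℕ),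
      cvec (∑ θ ∈ s, g θ • f θ) = ∑ θ ∈ s, (g θ : ℂ) • cvec (f θ) := by
    intro κ s f g
    funext x
    show ((∑ θ ∈ s, g θ • f θ) x : ℂ) = _
    rw [Finset.sum_apply]
    push_cast [Finset.sum_apply, Pi.smul_apply, nsmul_eq_mul]
    rfl
  -- structure of Vmap for θ ∈ T
  have hbundle : ∀ θ ∈ T, ∃ (j k : Fin n) (t : ℂ), j ≠ k ∧ Jset θ = {j, k} ∧ t ≠ 0 ∧
      Vmap M θ = fun x => t * Esp j k x := by
    intro θ hθ
    obtain ⟨j, k, hjk, hJθ⟩ := Finset.card_eq_two.1 (hθ2 θ hθ)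
    have hjJ : j ∈ Jset θ := by rw [hJθ]; exact Finset.mem_insert_self _ _
    have hkJ : k ∈ Jset θ := by
      rw [hJθ]; exact Finset.mem_insert_of_mem (Finset.mem_singleton_self _)
    have hθj : θ j = -1 := (hJmem θ j).1 hjJ
    have hθk : θ k = -1 := (hJmem θ k).1 hkJ
    have hcj : cvec θ j = -1 := by simp [cvec, hθj]
    have hck : cvec θ k = -1 := by simp [cvec, hθk]
    have hdot : cvec θ ⬝ᵥ Vmap M θ = 0 := skew_dot M hskew (cvec θ)
    have hsum2 : cvec θ ⬝ᵥ Vmap M θ = cvec θ j * Vmap M θ j + cvec θ k * Vmap M θ k := by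
      show ∑ x, cvec θ x * Vmap M θ x = _
      rw [← Finset.sum_subset (Finset.subset_univ ({j, k} : Finset (Fin n)))]
      · rw [Finset.sum_pair hjk]
      · intro x _ hx
        have hxJ : x ∉ Jset θ := by rw [hJθ]; exact hx
        rw [hVoff θ hθ x hxJ, mul_zero]
    have h0 : cvec θ j * Vmap M θ j + cvec θ k * Vmap M θ k = 0 := by rw [← hsum2]; exact hdot
    rw [hcj, hck] at h0
    have hval : Vmap M θ k = -Vmap M θ j := by linear_combination -h0
    have htne : Vmap M θ j ≠ 0 := by
      intro ht
      have hV0 : M.mulVec (cvec θ) = 0 := by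
        funext x
        show Vmap M θ x = 0
        by_cases hxj : x = j
        · rw [hxj]; exact ht
        · by_cases hxk : x = k
          · rw [hxk, hval, ht, neg_zero]
          · exact hVoff θ hθ x (by rw [hJθ]; simp [hxj, hxk])
      have hc0 : cvec θ = 0 := hTLS (cvec θ) hV0 (hθbm θ hθ)
      have hj0 : cvec θ j = 0 := by rw [hc0]; rfl
      rw [hcj] at hj0
      norm_num at hj0
    refine ⟨j, k, Vmap M θ j, hjk, hJθ, htne, ?_⟩
    funext x
    show Vmap M θ x = Vmap M θ j * Esp j k x
    by_cases hxj : x = j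
    · subst hxj; rw [Esp_apply_left hjk, mul_one]
    · by_cases hxk : x = k
      · subst hxk; rw [Esp_apply_right hjk, hval]; ring
      · rw [Esp_apply_other hxj hxk, mul_zero]
        exact hVoff θ hθ x (by rw [hJθ]; simp [hxj, hxk])
  have hsum0T : ∀ θ ∈ T, ∑ x, Vmap M θ x = 0 := by
    intro θ hθ
    obtain ⟨j, k, t, hjk, hJθ, ht, hstruct⟩ := hbundle θ hθ
    have h1 : ∑ x, Esp j k x = 0 := by
      simp [Esp, Finset.sum_sub_distrib, Fintype.sum_pi_single']
    calc ∑ x, Vmap M θ x = ∑ x, t * Esp j k x := by simp only [hstruct]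
      _ = t * ∑ x, Esp j k x := by rw [Finset.mul_sum]
      _ = 0 := by rw [h1, mul_zero]
  have hFne : ∀ θ ∈ T, ∀ x, Vmap M θ x ≠ 0 ↔ x ∈ Jset θ := by
    intro θ hθ x
    obtain ⟨j, k, t, hjk, hJθ, ht, hstruct⟩ := hbundle θ hθ
    constructor
    · intro h
      by_contra hx
      exact h (hVoff θ hθ x hx)
    · intro hx
      rw [hJθ, Finset.mem_insert, Finset.mem_singleton] at hx
      rcases hx with rfl | rfl
      · rw [hstruct]
        simpa [Esp_apply_left hjk] using ht
      · rw [hstruct]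
        simp only [Esp_apply_right hjk]
        simpa using ht
  -- independence
  have hindT : LinearIndependent ℂ (fun θ : ↥T => cvec (θ : Fin n → ℤ)) := by
    have hinj : Function.Injective (fun θ : ↥T => (⟨↑θ, hTS ↑θ θ.2⟩ : S)) := by
      intro x y hxy
      have h' := congrArg Subtype.val hxy
      exact Subtype.ext h'
    exact hindep.comp (fun θ : ↥T => (⟨↑θ, hTS ↑θ θ.2⟩ : S)) hinj
  have hzero_subtype : ∀ g : ↥T → ℂ, (∑ θ : ↥T, g θ • Vmap M (θ : Fin n → ℤ)) = 0 →
      ∀ θ : ↥T, g θ = 0 := by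
    intro g hg
    have h1 : M.mulVec (∑ θ ∈ (Finset.univ : Finset ↥T), g θ • cvec ((θ : ↥T) : Fin n → ℤ)) = 0 := by
      rw [hmulVec_sum ↥T Finset.univ (fun θ => (θ : Fin n → ℤ)) g]
      exact hg
    have h2 : bmap β (∑ θ ∈ (Finset.univ : Finset ↥T), g θ • cvec ((θ : ↥T) : Fin n → ℤ)) = 0 := by
      rw [hbmap_sum ↥T Finset.univ (fun θ => (θ : Fin n → ℤ)) g]
      exact Finset.sum_eq_zero (fun θ _ => by rw [hθbm ↑θ θ.2, smul_zero])
    have h3 := hTLS _ h1 h2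
    exact Fintype.linearIndependent_iff.1 hindT g h3
  have hindF : LinearIndependent ℂ (fun θ : ↥T => Vmap M (θ : Fin n → ℤ)) := by
    rw [Fintype.linearIndependent_iff]
    intro g hg i
    exact hzero_subtype g hg i
  have hzeroT : ∀ g : (Fin n → ℤ) → ℂ, (∑ θ ∈ T, g θ • Vmap M θ) = 0 → ∀ θ ∈ T, g θ = 0 := by
    intro g hg θ hθ
    have h : ∑ θ : ↥T, g ↑θ • Vmap M (↑θ : Fin n → ℤ) = 0 := by
      rw [Finset.sum_coe_sort T (fun θ => g θ • Vmap M θ)]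
      exact hg
    exact hzero_subtype (fun θ => g ↑θ) h ⟨θ, hθ⟩
    -- the coefficient vector α
  have hα_rep : M.mulVec (cvec w) = ∑ θ ∈ T, (cc θ : ℂ) • Vmap M θ := by
    rw [← hwdef, hcvec_sum (Fin n → ℤ) T (fun θ => θ) cc,
      hmulVec_sum (Fin n → ℤ) T (fun θ => θ) (fun θ => (cc θ : ℂ))]
  have hα_x : ∀ x, M.mulVec (cvec w) x = ∑ θ ∈ T, (cc θ : ℂ) * Vmap M θ x := by
    intro x
    rw [hα_rep]
    simp [Finset.sum_apply]
  -- the median vertex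
  obtain ⟨a, b, c, hab, hac, hbc, hJw_eq⟩ := Finset.card_eq_three.1 hwJ3
  set Fv : ↥T → (Fin n → ℂ) := fun θ => Vmap M (θ : Fin n → ℤ) with hFv_def
  set Jv : ↥T → Finset (Fin n) := fun θ => Jset ((θ : Fin n → ℤ)) with hJv_def
  obtain ⟨y, hmed⟩ := median_exists Fv Jv hindF
      (fun θ x => hFne ↑θ θ.2 x) (fun θ => hsum0T ↑θ θ.2) a b c hab hac hbc
  -- relation lemmas
  have hrel_refl : ∀ p, Esp p p ∈ spny Fv Jv y := fun p => by
    rw [Esp_self]; exact zero_mem _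
  have hrel_symm : ∀ p q, Esp p q ∈ spny Fv Jv y → Esp q p ∈ spny Fv Jv y := by
    intro p q h
    rw [Esp_neg p q]
    exact neg_mem h
  have hrel_trans : ∀ p q r, Esp p q ∈ spny Fv Jv y → Esp q r ∈ spny Fv Jv y →
      Esp p r ∈ spny Fv Jv y := by
    intro p q r h1 h2
    have he : Esp p r = Esp p q + Esp q r := by simp only [Esp]; abel
    rw [he]; exact add_mem h1 h2
  have hVmem : ∀ θ (hθ : θ ∈ T), y ∉ Jset θ → Vmap M θ ∈ spny Fv Jv y := by
    intro θ hθ hy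
    apply Submodule.subset_span
    exact ⟨⟨θ, hθ⟩, hy, rfl⟩
  have hedge : ∀ θ ∈ T, y ∉ Jset θ → ∀ x ∈ Jset θ, ∀ x' ∈ Jset θ,
      Esp x x' ∈ spny Fv Jv y := by
    intro θ hθ hy x hx x' hx'
    obtain ⟨j, k, t, hjk, hJθ, ht, hstruct⟩ := hbundle θ hθ
    have hEjk : Esp j k ∈ spny Fv Jv y := by
      have h1 := hVmem θ hθ hy
      have h2 : Esp j k = t⁻¹ • Vmap M θ := by
        rw [hstruct]
        funext x0
        simp only [Pi.smul_apply, smul_eq_mul]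
        rw [← mul_assoc, inv_mul_cancel₀ ht, one_mul]
      rw [h2]
      exact Submodule.smul_mem _ _ h1
    rw [hJθ, Finset.mem_insert, Finset.mem_singleton] at hx hx'
    rcases hx with rfl | rfl <;> rcases hx' with rfl | rfl
    · exact hrel_refl _
    · exact hEjk
    · exact hrel_symm _ _ hEjk
    · exact hrel_refl _
  have hJy : ∀ θ ∈ T, ∀ x ∈ Jset θ, ∀ x' ∈ Jset θ, x ≠ x' → x ≠ y → x' ≠ y →
      y ∉ Jset θ := by
    intro θ hθ x hx x' hx' hxx' hxy hx'y hyJ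
    obtain ⟨j, k, t, hjk, hJθ, ht, hstruct⟩ := hbundle θ hθ
    rw [hJθ, Finset.mem_insert, Finset.mem_singleton] at hx hx' hyJ
    rcases hyJ with h | h
    · rcases hx with rfl | rfl
      · exact hxy h.symm
      · rcases hx' with rfl | rfl
        · exact hx'y h.symm
        · exact hxx' rfl
    · rcases hx with rfl | rfl
      · rcases hx' with rfl | rfl
        · exact hxx' rfl
        · exact hx'y h.symm
      · exact hxy h.symm
  -- marked vertices and components
  set VS : Finset (Fin n) := (Jset w).erase y with hVS_def
  have hVSJ : ∀ v ∈ VS, v ∈ Jset w := fun v hv => Finset.mem_of_mem_erase hv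
  have hVSy : ∀ v ∈ VS, v ≠ y := fun v hv => Finset.ne_of_mem_erase hv
  have habc : ∀ v ∈ Jset w, v = a ∨ v = b ∨ v = c := by
    intro v hv
    rw [hJw_eq] at hv
    simpa using hv
  have hVSsep : ∀ v ∈ VS, ∀ v' ∈ VS, v ≠ v' → Esp v v' ∉ spny Fv Jv y :=
    fun v hv v' hv' hne => hmed v v' (habc v (hVSJ v hv)) (habc v' (hVSJ v' hv')) hne
      (hVSy v hv) (hVSy v' hv')
  set Tv : Fin n → Finset (Fin n → ℤ) :=
    fun v => T.filter (fun θ => ∃ x ∈ Jset θ, x ≠ y ∧ Esp x v ∈ spny Fv Jv y) with hTv_def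
  have hTv_sub : ∀ v, Tv v ⊆ T := fun v => Finset.filter_subset _ _
  have hmemTv : ∀ v θ, θ ∈ T → ∀ x, x ∈ Jset θ → x ≠ y → Esp x v ∈ spny Fv Jv y →
      θ ∈ Tv v := by
    intro v θ hθ x hx hxy hr
    exact Finset.mem_filter.2 ⟨hθ, x, hx, hxy, hr⟩
  have hchase : ∀ v θ, θ ∈ Tv v → ∀ x, x ∈ Jset θ → x ≠ y → Esp x v ∈ spny Fv Jv y := by
    intro v θ hθ x hx hxy
    obtain ⟨hθT, x', hx', hx'y, hr'⟩ := Finset.mem_filter.1 hθ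
    by_cases hxx' : x = x'
    · rw [hxx']; exact hr'
    · exact hrel_trans _ _ _
        (hedge θ hθT (hJy θ hθT x hx x' hx' hxx' hxy hx'y) x hx x' hx') hr'
  have hdisjTv : ∀ v ∈ VS, ∀ v' ∈ VS, v ≠ v' → ∀ θ, θ ∈ Tv v → θ ∈ Tv v' → False := by
    intro v hv v' hv' hne θ h1 h2
    obtain ⟨hθT, x', hx', hx'y, hr'⟩ := Finset.mem_filter.1 h2
    have hrv : Esp x' v ∈ spny Fv Jv y := hchase v θ h1 x' hx' hx'y
    exact hVSsep v hv v' hv' hne (hrel_trans _ _ _ (hrel_symm _ _ hrv) hr')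
  have hnotin_Tv : ∀ v x, x ≠ y → Esp x v ∉ spny Fv Jv y → ∀ θ ∈ Tv v, x ∉ Jset θ :=
    fun v x hxy hnr θ hθ hx => hnr (hchase v θ hθ x hx hxy)
  have hnotin_coTv : ∀ v x, x ≠ y → Esp x v ∈ spny Fv Jv y → ∀ θ ∈ T, θ ∉ Tv v →
      x ∉ Jset θ :=
    fun v x hxy hr θ hθ hnθ hx => hnθ (hmemTv v θ hθ x hx hxy hr)
  -- the component sums
  set Uv : Fin n → (Fin n → ℤ) := fun v => ∑ θ ∈ Tv v, cc θ • θ with hUv_def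
  have hUvCx : ∀ v x, M.mulVec (cvec (Uv v)) x = ∑ θ ∈ Tv v, (cc θ : ℂ) * Vmap M θ x := by
    intro v x
    have h1 : M.mulVec (cvec (Uv v)) = ∑ θ ∈ Tv v, (cc θ : ℂ) • Vmap M θ := by
      simp only [hUv_def]
      rw [hcvec_sum (Fin n → ℤ) (Tv v) (fun θ => θ) cc,
        hmulVec_sum (Fin n → ℤ) (Tv v) (fun θ => θ) (fun θ => (cc θ : ℂ))]
    rw [h1]
    simp [Finset.sum_apply]
  have hUc0 : ∀ v ∈ VS, ∀ x, x ≠ y → x ≠ v → M.mulVec (cvec (Uv v)) x = 0 := by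
    intro v hv x hxy hxv
    rw [hUvCx v x]
    by_cases hr : Esp x v ∈ spny Fv Jv y
    · have hxw : x ∉ Jset w := by
        intro hxw
        exact hVSsep x (Finset.mem_erase.2 ⟨hxy, hxw⟩) v hv hxv hr
      have he : ∑ θ ∈ Tv v, (cc θ : ℂ) * Vmap M θ x = ∑ θ ∈ T, (cc θ : ℂ) * Vmap M θ x := by
        apply Finset.sum_subset (hTv_sub v)
        intro θ hθT hθn
        rw [hVoff θ hθT x (hnotin_coTv v x hxy hr θ hθT hθn), mul_zero]
      rw [he, ← hα_x x]
      exact hwlam x hxw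
    · exact Finset.sum_eq_zero (fun θ hθ => by
        rw [hVoff θ (hTv_sub v hθ) x (hnotin_Tv v x hxy hr θ hθ), mul_zero])
  have hUcv : ∀ v ∈ VS, M.mulVec (cvec (Uv v)) v = M.mulVec (cvec w) v := by
    intro v hv
    rw [hUvCx v v, hα_x v]
    apply Finset.sum_subset (hTv_sub v)
    intro θ hθT hθn
    rw [hVoff θ hθT v (hnotin_coTv v v (hVSy v hv) (hrel_refl v) θ hθT hθn), mul_zero]
  have hUcy : ∀ v ∈ VS, M.mulVec (cvec (Uv v)) y = -(M.mulVec (cvec w) v) := by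
    intro v hv
    have htot : ∑ x, M.mulVec (cvec (Uv v)) x = 0 := by
      simp only [hUvCx v]
      rw [Finset.sum_comm]
      exact Finset.sum_eq_zero (fun θ hθ => by
        rw [← Finset.mul_sum, hsum0T θ (hTv_sub v hθ), mul_zero])
    have herase : ∑ x ∈ Finset.univ.erase y, M.mulVec (cvec (Uv v)) x
        = M.mulVec (cvec w) v := by
      rw [Finset.sum_eq_single_of_mem v (Finset.mem_erase.2 ⟨hVSy v hv, Finset.mem_univ v⟩)
        (fun x hx hxv => hUc0 v hv x (Finset.ne_of_mem_erase hx) hxv)]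
      exact hUcv v hv
    have hsplit := Finset.add_sum_erase Finset.univ
      (fun x => M.mulVec (cvec (Uv v)) x) (Finset.mem_univ y)
    rw [herase, htot] at hsplit
    linear_combination hsplit
  have hedgeat : ∀ v, v ∈ Jset w → ∃ θ, θ ∈ T ∧ v ∈ Jset θ := by
    intro v hv
    by_contra hno
    push_neg at hno
    have hwv : w v = -1 := (hJmem w v).1 hv
    have he : w v = ∑ θ ∈ T, cc θ • θ v := by
      rw [← hwdef]
      simp [Finset.sum_apply]
    have hnn : (0:ℤ) ≤ ∑ θ ∈ T, cc θ • θ v :=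
      Finset.sum_nonneg (fun θ hθ => nsmul_nonneg (hθpos θ hθ v (hno θ hθ)) (cc θ))
    linarith
  -- T is covered by the components
  set T0 : Finset (Fin n → ℤ) := T.filter (fun θ => ∀ v ∈ VS, θ ∉ Tv v) with hT0_def
  have hT0x : ∀ x, x ≠ y → ∑ θ ∈ T0, (cc θ : ℂ) * Vmap M θ x = 0 := by
    intro x hxy
    by_cases hex : ∃ θ0, θ0 ∈ T0 ∧ x ∈ Jset θ0
    · obtain ⟨θ0, hθ0, hxθ0⟩ := hex
      obtain ⟨hθ0T, hθ0p⟩ := Finset.mem_filter.1 hθ0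
      have hxw : x ∉ Jset w := by
        intro hxw
        exact hθ0p x (Finset.mem_erase.2 ⟨hxy, hxw⟩)
          (hmemTv x θ0 hθ0T x hxθ0 hxy (hrel_refl x))
      have hall : ∀ θ ∈ T, θ ∉ T0 → x ∉ Jset θ := by
        intro θ hθT hθn hxθ
        have hp : ¬ ∀ v ∈ VS, θ ∉ Tv v := fun hp => hθn (Finset.mem_filter.2 ⟨hθT, hp⟩)
        push_neg at hp
        obtain ⟨v, hv, hθv⟩ := hp
        exact hθ0p v hv (hmemTv v θ0 hθ0T x hxθ0 hxy (hchase v θ hθv x hxθ hxy))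
      have he : ∑ θ ∈ T0, (cc θ : ℂ) * Vmap M θ x = ∑ θ ∈ T, (cc θ : ℂ) * Vmap M θ x :=
        Finset.sum_subset (Finset.filter_subset _ _)
          (fun θ hθT hθn => by rw [hVoff θ hθT x (hall θ hθT hθn), mul_zero])
      rw [he, ← hα_x x]
      exact hwlam x hxw
    · push_neg at hex
      exact Finset.sum_eq_zero (fun θ hθ => by
        rw [hVoff θ (Finset.filter_subset _ _ hθ) x (hex θ hθ), mul_zero])
  have hT0empty : ∀ θ ∈ T, ¬ (∀ v ∈ VS, θ ∉ Tv v) := by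
    intro θf hθf hpf
    have hθfT0 : θf ∈ T0 := Finset.mem_filter.2 ⟨hθf, hpf⟩
    have hy0 : ∑ θ ∈ T0, (cc θ : ℂ) * Vmap M θ y = 0 := by
      have htot : ∑ x, ∑ θ ∈ T0, (cc θ : ℂ) * Vmap M θ x = 0 := by
        rw [Finset.sum_comm]
        exact Finset.sum_eq_zero (fun θ hθ => by
          rw [← Finset.mul_sum, hsum0T θ (Finset.filter_subset _ _ hθ), mul_zero])
      have hrest : ∑ x ∈ Finset.univ.erase y, ∑ θ ∈ T0, (cc θ : ℂ) * Vmap M θ x = 0 :=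
        Finset.sum_eq_zero (fun x hx => hT0x x (Finset.ne_of_mem_erase hx))
      have hsplit := Finset.add_sum_erase Finset.univ
        (fun x => ∑ θ ∈ T0, (cc θ : ℂ) * Vmap M θ x) (Finset.mem_univ y)
      rw [hrest, htot] at hsplit
      simpa using hsplit
    have hfun : ∑ θ ∈ T0, (cc θ : ℂ) • Vmap M θ = 0 := by
      funext x
      show (∑ θ ∈ T0, (cc θ : ℂ) • Vmap M θ) x = 0
      rw [Finset.sum_apply]
      simp only [Pi.smul_apply, smul_eq_mul]
      by_cases hxy : x = y
      · rw [hxy]; exact hy0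
      · exact hT0x x hxy
    have hTT0 : T.filter (fun θ => θ ∈ T0) = T0 := by
      rw [Finset.filter_mem_eq_inter]
      exact Finset.inter_eq_right.2 (Finset.filter_subset _ _)
    have hind_eq : ∑ θ ∈ T, (if θ ∈ T0 then (cc θ : ℂ) else 0) • Vmap M θ
        = ∑ θ ∈ T0, (cc θ : ℂ) • Vmap M θ := by
      simp only [ite_smul, zero_smul]
      rw [← Finset.sum_filter, hTT0]
    have hc0 := hzeroT (fun θ => if θ ∈ T0 then (cc θ : ℂ) else 0)
      (by rw [hind_eq]; exact hfun) θf hθf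
    simp only [hθfT0, if_true] at hc0
    have hcc0 : cc θf = 0 := by exact_mod_cast hc0
    exact (hccpos θf hθf).ne' hcc0
  have hTbiU : T = VS.biUnion Tv := by
    apply Finset.Subset.antisymm
    · intro θ hθ
      have h := hT0empty θ hθ
      push_neg at h
      obtain ⟨v, hv, hθv⟩ := h
      exact Finset.mem_biUnion.2 ⟨v, hv, hθv⟩
    · intro θ hθ
      obtain ⟨v, hv, hθv⟩ := Finset.mem_biUnion.1 hθ
      exact hTv_sub v hθv
  have hpair : (VS : Set (Fin n)).PairwiseDisjoint Tv := by
    intro v hv v' hv' hne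
    refine Finset.disjoint_left.2 ?_
    intro θ h1 h2
    exact hdisjTv v (Finset.mem_coe.1 hv) v' (Finset.mem_coe.1 hv') hne θ h1 h2
  have hwsum : ∀ x : Fin n, w x = ∑ v ∈ VS, Uv v x := by
    intro x
    have h1 : w x = ∑ θ ∈ T, cc θ • θ x := by
      rw [← hwdef]; simp [Finset.sum_apply]
    rw [h1, hTbiU, Finset.sum_biUnion hpair]
    exact Finset.sum_congr rfl (fun v hv => by simp [hUv_def, Finset.sum_apply])
  have hUv_nonneg : ∀ v ∈ VS, ∀ v' ∈ VS, v' ≠ v → 0 ≤ Uv v' v := by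
    intro v hv v' hv' hne
    have h1 : Uv v' v = ∑ θ ∈ Tv v', cc θ • θ v := by simp [hUv_def, Finset.sum_apply]
    rw [h1]
    apply Finset.sum_nonneg
    intro θ hθ
    have hvJ : v ∉ Jset θ := by
      intro hvJ
      exact hdisjTv v hv v' hv' (Ne.symm hne) θ
        (hmemTv v θ (hTv_sub v' hθ) v hvJ (hVSy v hv) (hrel_refl v)) hθ
    exact nsmul_nonneg (hθpos θ (hTv_sub v' hθ) v hvJ) (cc θ)
  have hUvv : ∀ v ∈ VS, Uv v v ≤ -1 := by
    intro v hv
    have hw1 : w v = -1 := (hJmem w v).1 (hVSJ v hv)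
    have hsplit := Finset.add_sum_erase VS (fun v' => Uv v' v) hv
    have hnn : (0:ℤ) ≤ ∑ v' ∈ VS.erase v, Uv v' v :=
      Finset.sum_nonneg (fun v' hv' =>
        hUv_nonneg v hv v' (Finset.mem_of_mem_erase hv') (Finset.ne_of_mem_erase hv'))
    have hws := hwsum v
    rw [hw1] at hws
    linarith
  have hkey : ∀ v ∈ VS, Uv v y ≤ -1 := by
    intro v hv
    by_cases hαv : M.mulVec (cvec w) v = 0
    · exfalso
      have hfun : ∑ θ ∈ Tv v, (cc θ : ℂ) • Vmap M θ = 0 := by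
        funext x
        show (∑ θ ∈ Tv v, (cc θ : ℂ) • Vmap M θ) x = 0
        rw [Finset.sum_apply]
        simp only [Pi.smul_apply, smul_eq_mul]
        rw [← hUvCx v x]
        by_cases hxy : x = y
        · rw [hxy, hUcy v hv, hαv, neg_zero]
        · by_cases hxv : x = v
          · rw [hxv, hUcv v hv]; exact hαv
          · exact hUc0 v hv x hxy hxv
      have hTT : T.filter (fun θ => θ ∈ Tv v) = Tv v := by
        rw [Finset.filter_mem_eq_inter]
        exact Finset.inter_eq_right.2 (hTv_sub v)
      have hind_eq : ∑ θ ∈ T, (if θ ∈ Tv v then (cc θ : ℂ) else 0) • Vmap M θ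
          = ∑ θ ∈ Tv v, (cc θ : ℂ) • Vmap M θ := by
        simp only [ite_smul, zero_smul]
        rw [← Finset.sum_filter, hTT]
      obtain ⟨θ0, hθ0T, hvθ0⟩ := hedgeat v (hVSJ v hv)
      have hθ0Tv : θ0 ∈ Tv v := hmemTv v θ0 hθ0T v hvθ0 (hVSy v hv) (hrel_refl v)
      have hc0 := hzeroT (fun θ => if θ ∈ Tv v then (cc θ : ℂ) else 0)
        (by rw [hind_eq]; exact hfun) θ0 hθ0T
      simp only [hθ0Tv, if_true] at hc0
      have hcc0 : cc θ0 = 0 := by exact_mod_cast hc0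
      exact (hccpos θ0 hθ0T).ne' hcc0
    · have hdot := skew_dot M hskew (cvec (Uv v))
      have hvy : v ≠ y := hVSy v hv
      have hexp : cvec (Uv v) ⬝ᵥ M.mulVec (cvec (Uv v)) =
          cvec (Uv v) v * M.mulVec (cvec w) v
            + cvec (Uv v) y * (-(M.mulVec (cvec w) v)) := by
        show ∑ x, cvec (Uv v) x * M.mulVec (cvec (Uv v)) x = _
        rw [← Finset.sum_subset (Finset.subset_univ ({v, y} : Finset (Fin n)))]
        · rw [Finset.sum_pair hvy, hUcv v hv, hUcy v hv]
        · intro x _ hx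
          rw [Finset.mem_insert, Finset.mem_singleton] at hx
          push_neg at hx
          rw [hUc0 v hv x hx.2 hx.1, mul_zero]
      have h0 : cvec (Uv v) v * M.mulVec (cvec w) v
          + cvec (Uv v) y * (-(M.mulVec (cvec w) v)) = 0 := by
        rw [← hexp]; exact hdot
      have hsub : ((Uv v v : ℤ) : ℂ) = ((Uv v y : ℤ) : ℂ) := by
        have hfac : M.mulVec (cvec w) v * (((Uv v v : ℤ):ℂ) - ((Uv v y : ℤ):ℂ)) = 0 := by
          have e1 : cvec (Uv v) v = ((Uv v v : ℤ) : ℂ) := rfl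
          have e2 : cvec (Uv v) y = ((Uv v y : ℤ) : ℂ) := rfl
          rw [e1, e2] at h0
          linear_combination h0
        rcases mul_eq_zero.1 hfac with h | h
        · exact absurd h hαv
        · exact sub_eq_zero.1 h
      have heq : Uv v v = Uv v y := by exact_mod_cast hsub
      rw [← heq]
      exact hUvv v hv
  -- final contradiction
  have hcard2 : (2:ℕ) ≤ VS.card := by
    have h := Finset.pred_card_le_card_erase (s := Jset w) (a := y)
    rw [hwJ3] at h
    exact h
  have hsumy : w y = ∑ v ∈ VS, Uv v y := hwsum y
  have hbound : ∑ v ∈ VS, Uv v y ≤ ∑ v ∈ VS, (-1 : ℤ) := Finset.sum_le_sum hkey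
  have hconst : ∑ v ∈ VS, (-1:ℤ) = -(VS.card : ℤ) := by simp
  have hwy := hwge y
  rw [hsumy] at hwy
  have hc2 : (2:ℤ) ≤ (VS.card : ℤ) := by exact_mod_cast hcard2
  linarith
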